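/- arXiv:1602.01514 — 2 statements merged into one kernel-verified Lean document; each statement's English description precedes it below -/
import Mathlib

section
/- The polynomial Δ = (A₁C₂ − A₂C₁)² + (B₂C₁ − C₂B₁)(A₁B₂ − A₂B₁) in six variables A₁, B₁, C₁, A₂, B₂, C₂ over an algebraically closed field (or over ℚ) is irreducible. -/
open MvPolynomial Polynomial

noncomputable section Stmt4Aux

private abbrev R5 : Type := MvPolynomial (Fin 5) ℚ

-- variables in R5: X0 = B₁, X1 = C₁, X2 = A₂, X3 = B₂, X4 = C₂
private def bb : R5 := X 3 * (X 3 * X 1 - X 4 * X 0) - 2 * (X 2 * X 1 * X 4)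
private def cc : R5 := X 2 ^ 2 * X 1 ^ 2 - X 2 * X 0 * (X 3 * X 1 - X 4 * X 0)
private def PP : Polynomial R5 :=
  Polynomial.C ((X 4 : R5) ^ 2) * Polynomial.X ^ 2 + Polynomial.C bb * Polynomial.X
    + Polynomial.C cc


private lemma quad_coeff2 {R : Type} [CommRing R] (a b c : R) :
    (Polynomial.C a * Polynomial.X ^ 2 + Polynomial.C b * Polynomial.X
      + Polynomial.C c).coeff 2 = a := by
  simp [Polynomial.coeff_add, Polynomial.coeff_C_mul, Polynomial.coeff_X_pow,
    Polynomial.coeff_C, Polynomial.coeff_X]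

private lemma quad_coeff1 {R : Type} [CommRing R] (a b c : R) :
    (Polynomial.C a * Polynomial.X ^ 2 + Polynomial.C b * Polynomial.X
      + Polynomial.C c).coeff 1 = b := by
  simp [Polynomial.coeff_add, Polynomial.coeff_C_mul, Polynomial.coeff_X_pow,
    Polynomial.coeff_C, Polynomial.coeff_X]

private lemma quad_coeff0 {R : Type} [CommRing R] (a b c : R) :
    (Polynomial.C a * Polynomial.X ^ 2 + Polynomial.C b * Polynomial.X
      + Polynomial.C c).coeff 0 = c := by
  simp [Polynomial.coeff_add, Polynomial.coeff_C_mul, Polynomial.coeff_X_pow,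
    Polynomial.coeff_C, Polynomial.coeff_X]

private lemma hkey : bb ^ 2 - 4 * ((X 4 : R5) ^ 2) * cc
    = (X 3 * X 1 - X 4 * X 0) ^ 2 * ((X 3) ^ 2 - 4 * X 2 * X 4) := by
  unfold bb cc; ring

private lemma irr_X0 : Irreducible (X 0 : R5) := by
  rw [← MulEquiv.irreducible_iff (MvPolynomial.finSuccEquiv ℚ 4), finSuccEquiv_X_zero]
  exact Polynomial.prime_X.irreducible

private lemma prime_X4 : Prime (X 4 : R5) := by
  rw [← UniqueFactorizationMonoid.irreducible_iff_prime]
  have h := (MulEquiv.irreducible_iff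
    (MvPolynomial.renameEquiv ℚ (Equiv.swap (0 : Fin 5) 4)) (x := (X 0 : R5))).mpr irr_X0
  simpa using h

private lemma key : (MvPolynomial.finSuccEquiv ℚ 5)
    ((X 0 * X 5 - X 3 * X 2) ^ 2 + (X 4 * X 2 - X 5 * X 1) * (X 0 * X 4 - X 3 * X 1) :
      MvPolynomial (Fin 6) ℚ) = PP := by
  have h1 : (X 1 : MvPolynomial (Fin 6) ℚ) = X (Fin.succ 0) := rfl
  have h2 : (X 2 : MvPolynomial (Fin 6) ℚ) = X (Fin.succ 1) := rfl
  have h3 : (X 3 : MvPolynomial (Fin 6) ℚ) = X (Fin.succ 2) := rfl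
  have h4 : (X 4 : MvPolynomial (Fin 6) ℚ) = X (Fin.succ 3) := rfl
  have h5 : (X 5 : MvPolynomial (Fin 6) ℚ) = X (Fin.succ 4) := rfl
  rw [h1, h2, h3, h4, h5]
  simp only [map_add, map_sub, map_mul, map_pow, finSuccEquiv_X_zero, finSuccEquiv_X_succ]
  unfold PP bb cc
  simp only [map_sub, map_mul, map_add, map_pow, map_ofNat]
  ring

private lemma coeff2 : PP.coeff 2 = (X 4 : R5) ^ 2 := quad_coeff2 _ _ _

private lemma coeff1 : PP.coeff 1 = bb := quad_coeff1 _ _ _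

private lemma coeff0 : PP.coeff 0 = cc := quad_coeff0 _ _ _

private lemma not_X4_dvd_cc : ¬ (X 4 : R5) ∣ cc := by
  rintro ⟨d, hd⟩
  have h := congrArg (MvPolynomial.eval ![1, 1, 1, 2, 0]) hd
  simp [cc] at h
  norm_num at h

private lemma PP_primitive : PP.IsPrimitive := by
  intro r hr
  rw [Polynomial.C_dvd_iff_dvd_coeff] at hr
  have h2 : r ∣ (X 4 : R5) ^ 2 := coeff2 ▸ hr 2
  have h0 : r ∣ cc := coeff0 ▸ hr 0
  by_contra hu
  have hr0 : r ≠ 0 := by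
    rintro rfl
    exact pow_ne_zero 2 (MvPolynomial.X_ne_zero (4 : Fin 5)) (zero_dvd_iff.mp h2)
  obtain ⟨q, hq, hqr⟩ := WfDvdMonoid.exists_irreducible_factor hu hr0
  have hq4 : q ∣ X 4 :=
    ((UniqueFactorizationMonoid.irreducible_iff_prime).mp hq).dvd_of_dvd_pow (hqr.trans h2)
  have h4q : (X 4 : R5) ∣ q := hq.dvd_symm prime_X4.irreducible hq4
  exact not_X4_dvd_cc (h4q.trans (hqr.trans h0))

private lemma E_ne : (X 3 * X 1 - X 4 * X 0 : R5) ≠ 0 := by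
  intro h
  have := congrArg (MvPolynomial.eval ![0, 1, 0, 1, 0]) h
  simp at this

private lemma g_not_sq (y : R5) : y ^ 2 ≠ (X 3) ^ 2 - 4 * X 2 * X 4 := by
  intro hg
  set ψ : R5 →ₐ[ℚ] Polynomial ℚ := MvPolynomial.aeval ![0, 0, Polynomial.X, 0, 1]
  have hψg : ψ ((X 3 : R5) ^ 2 - 4 * X 2 * X 4) = Polynomial.C (-4) * Polynomial.X := by
    simp [ψ, map_ofNat]
  have h2 : (ψ y) ^ 2 = Polynomial.C (-4) * Polynomial.X := by
    rw [← hψg, ← hg, map_pow]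
  have hy0 : ψ y ≠ 0 := by
    intro h0
    rw [h0, zero_pow two_ne_zero] at h2
    have h3 := congrArg (Polynomial.eval 1) h2
    simp at h3
  have := congrArg Polynomial.natDegree h2
  rw [Polynomial.natDegree_pow, Polynomial.natDegree_C_mul (by norm_num : (-4 : ℚ) ≠ 0),
    Polynomial.natDegree_X] at this
  omega

/-- The polynomial
`Δ = (A₁C₂ − A₂C₁)² + (B₂C₁ − C₂B₁)(A₁B₂ − A₂B₁)` in the six variables
`A₁, B₁, C₁, A₂, B₂, C₂` (here `X 0, X 1, X 2, X 3, X 4, X 5`) over `ℚ`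
is irreducible. -/
theorem stmt4 :
    Irreducible
      ((X 0 * X 5 - X 3 * X 2) ^ 2 + (X 4 * X 2 - X 5 * X 1) * (X 0 * X 4 - X 3 * X 1) :
        MvPolynomial (Fin 6) ℚ) := by
  rw [← MulEquiv.irreducible_iff (MvPolynomial.finSuccEquiv ℚ 5), key]
  have := Classical.choice (inferInstance : Nonempty (NormalizedGCDMonoid R5))
  set K := FractionRing R5
  set f : R5 →+* K := algebraMap R5 K with hf
  have finj : Function.Injective f := IsFractionRing.injective R5 K
  rw [PP_primitive.irreducible_iff_irreducible_map_fraction_map (K := K)]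
  set A : K := f ((X 4 : R5) ^ 2) with hA
  have hA0 : A ≠ 0 := by
    rw [hA, ← map_zero f]
    exact fun h => pow_ne_zero 2 (MvPolynomial.X_ne_zero (4 : Fin 5)) (finj h)
  set Q : Polynomial K := Polynomial.X ^ 2 + Polynomial.C (A⁻¹ * f bb) * Polynomial.X
    + Polynomial.C (A⁻¹ * f cc) with hQ
  have hmap : PP.map f = Polynomial.C A * Q := by
    have e1 : Polynomial.C A * Polynomial.C (A⁻¹ * f bb) = Polynomial.C (f bb) := by
      rw [← Polynomial.C_mul, ← mul_assoc, mul_inv_cancel₀ hA0, one_mul]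
    have e2 : Polynomial.C A * Polynomial.C (A⁻¹ * f cc) = Polynomial.C (f cc) := by
      rw [← Polynomial.C_mul, ← mul_assoc, mul_inv_cancel₀ hA0, one_mul]
    rw [hQ, mul_add, mul_add, e2, ← mul_assoc, e1]
    simp [PP, hA, Polynomial.map_add, Polynomial.map_mul, Polynomial.map_pow,
      Polynomial.map_C, Polynomial.map_X]
  rw [hmap, irreducible_isUnit_mul (Polynomial.isUnit_C.mpr (isUnit_iff_ne_zero.mpr hA0))]
  have hQ2 : Q = Polynomial.C 1 * Polynomial.X ^ 2 + Polynomial.C (A⁻¹ * f bb) * Polynomial.X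
      + Polynomial.C (A⁻¹ * f cc) := by rw [map_one, one_mul]
  have hQd : Q.natDegree = 2 := by rw [hQ2]; exact Polynomial.natDegree_quadratic one_ne_zero
  have hQm : Q.Monic := by
    rw [Polynomial.Monic, Polynomial.leadingCoeff, hQd, hQ2, quad_coeff2]
  by_contra hirr
  obtain ⟨c1, c2, h0, h1⟩ := (hQm.not_irreducible_iff_exists_add_mul_eq_coeff hQd).mp hirr
  have hc0 : Q.coeff 0 = A⁻¹ * f cc := by rw [hQ2, quad_coeff0]
  have hc1 : Q.coeff 1 = A⁻¹ * f bb := by rw [hQ2, quad_coeff1]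
  rw [hc0] at h0
  rw [hc1] at h1
  have hfc : f cc = A * (c1 * c2) := by
    linear_combination A * h0 - f cc * mul_inv_cancel₀ hA0
  have hfb : f bb = A * (c1 + c2) := by
    linear_combination A * h1 - f bb * mul_inv_cancel₀ hA0
  -- the discriminant is a square in K
  have hdisc : f (X 3 * X 1 - X 4 * X 0 : R5) ^ 2 * f ((X 3 : R5) ^ 2 - 4 * X 2 * X 4)
      = (A * (c1 - c2)) ^ 2 := by
    have haux : f ((X 3 * X 1 - X 4 * X 0 : R5) ^ 2 * ((X 3 : R5) ^ 2 - 4 * X 2 * X 4))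
        = f bb ^ 2 - 4 * A * f cc := by
      rw [← hkey, hA]
      push_cast [map_sub, map_mul, map_pow, map_ofNat]
      ring
    rw [← map_pow, ← map_mul, haux, hfb, hfc]
    ring
  have hE : f (X 3 * X 1 - X 4 * X 0 : R5) ≠ 0 := by
    rw [← map_zero f]
    exact fun h => E_ne (finj h)
  set t : K := A * (c1 - c2) / f (X 3 * X 1 - X 4 * X 0 : R5) with ht
  have htsq : t ^ 2 = f ((X 3 : R5) ^ 2 - 4 * X 2 * X 4) := by
    rw [ht, div_pow, ← hdisc]
    rw [mul_comm, mul_div_assoc, div_self (pow_ne_zero 2 hE), mul_one]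
  have hint : IsIntegral R5 t := by
    refine ⟨Polynomial.X ^ 2 - Polynomial.C ((X 3 : R5) ^ 2 - 4 * X 2 * X 4), ?_, ?_⟩
    · exact Polynomial.monic_X_pow_sub_C _ (by norm_num)
    · rw [Polynomial.eval₂_sub, Polynomial.eval₂_X_pow, Polynomial.eval₂_C, ← hf, ← htsq]
      ring
  obtain ⟨y, hy⟩ := IsIntegrallyClosed.isIntegral_iff.mp hint
  rw [← hf] at hy
  refine g_not_sq y (finj ?_)
  rw [map_pow, hy]
  exact htsq

end Stmt4Aux
end

section
/- Let δ₁, δ₂ ∈ k[u₀,u₁,v₀,v₁] be bihomogeneous of bidegree (2,3) and δ₃ bihomogeneous of bidegree (4,1), over an algebraically closed field k. Suppose δ₃ vanishes at none of the common zeros of δ₁ and δ₂ in P¹ × P¹, and the 12 common zeros of δ₁, δ₂ are distinct with pairwise distinct second coordinates (v₀ : v₁). If P₁, P₂ are bihomogeneous of bidegree (2,0), P₃ bihomogeneous of bidegree (0,2), and P₁δ₁ + P₂δ₂ + P₃δ₃ = 0, then P₁ = P₂ = P₃ = 0. -/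
open MvPolynomial

noncomputable def stmt15fe (i j l m : ℕ) : Fin 4 →₀ ℕ :=
  Finsupp.equivFunOnFinite.symm ![i, j, l, m]

lemma stmt15fe_apply (i j l m : ℕ) (a : Fin 4) :
    stmt15fe i j l m a = ![i, j, l, m] a := rfl

lemma stmt15fe_eq_iff (i j l m : ℕ) (d : Fin 4 →₀ ℕ) :
    stmt15fe i j l m = d ↔ i = d 0 ∧ j = d 1 ∧ l = d 2 ∧ m = d 3 := by
  constructor
  · rintro rfl; exact ⟨rfl, rfl, rfl, rfl⟩
  · rintro ⟨h1, h2, h3, h4⟩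
    apply Finsupp.ext; intro x
    fin_cases x <;> simp_all [stmt15fe_apply]

lemma stmt15_eval_monomial_fe {k : Type*} [CommSemiring k] (f : Fin 4 → k)
    (i j l m : ℕ) (c : k) :
    eval f (monomial (stmt15fe i j l m) c) = c * f 0 ^ i * f 1 ^ j * f 2 ^ l * f 3 ^ m := by
  rw [eval_monomial, Finsupp.prod_fintype _ _ (fun a => pow_zero _)]
  rw [Fin.prod_univ_four]
  simp [stmt15fe_apply, mul_assoc]

lemma stmt15_weight_eq (w : Fin 4 → ℕ × ℕ) (hw : w = ![(1,0), (1,0), (0,1), (0,1)])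
    (d : Fin 4 →₀ ℕ) :
    Finsupp.weight w d = (d 0 + d 1, d 2 + d 3) := by
  rw [Finsupp.weight_apply, Finsupp.sum_fintype _ _ (fun i => by simp),
    Fin.sum_univ_four, hw]
  simp [Prod.ext_iff]

lemma stmt15_rep {k : Type*} [CommSemiring k] {w : Fin 4 → ℕ × ℕ}
    (hw : w = ![(1,0), (1,0), (0,1), (0,1)]) (a b : ℕ) (P : MvPolynomial (Fin 4) k)
    (h : P.IsWeightedHomogeneous w (a, b)) :
    P = ∑ i ∈ Finset.range (a+1), ∑ j ∈ Finset.range (b+1),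
        monomial (stmt15fe i (a-i) j (b-j)) (coeff (stmt15fe i (a-i) j (b-j)) P) := by
  ext d
  simp only [coeff_sum, coeff_monomial]
  by_cases hd : d 0 + d 1 = a ∧ d 2 + d 3 = b
  · have hfe : stmt15fe (d 0) (a - d 0) (d 2) (b - d 2) = d :=
      (stmt15fe_eq_iff _ _ _ _ d).2 (by omega)
    rw [Finset.sum_eq_single (d 0), Finset.sum_eq_single (d 2)]
    · rw [if_pos hfe, hfe]
    · intro j hj hne
      rw [if_neg]
      rw [stmt15fe_eq_iff]
      rintro ⟨-, -, rfl, -⟩; exact hne rfl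
    · intro hmem; exact absurd (Finset.mem_range.2 (by omega)) hmem
    · intro i hi hne
      apply Finset.sum_eq_zero; intro j hj
      rw [if_neg]
      rw [stmt15fe_eq_iff]
      rintro ⟨rfl, -, -, -⟩; exact hne rfl
    · intro hmem; exact absurd (Finset.mem_range.2 (by omega)) hmem
  · have hc : coeff d P = 0 := by
      by_contra hc
      have := h hc
      rw [stmt15_weight_eq w hw, Prod.mk.injEq] at this
      exact hd ⟨this.1, this.2⟩
    rw [hc]; symm
    apply Finset.sum_eq_zero; intro i hi
    apply Finset.sum_eq_zero; intro j hj
    rw [if_neg]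
    rw [stmt15fe_eq_iff]
    rw [Finset.mem_range] at hi hj
    rintro ⟨rfl, h2, rfl, h4⟩
    exact hd (by omega)

lemma stmt15_cubic_root {k : Type*} [Field k] [IsAlgClosed k] (A B C D : k) :
    ∃ x y : k, ¬(x = 0 ∧ y = 0) ∧ A*x^3 + B*x^2*y + C*x*y^2 + D*y^3 = 0 := by
  by_cases hA : A = 0
  · exact ⟨1, 0, by simp, by simp [hA]⟩
  · obtain ⟨t, ht⟩ := IsAlgClosed.exists_root
      (Polynomial.C A * Polynomial.X^3 + Polynomial.C B * Polynomial.X^2 +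
        Polynomial.C C * Polynomial.X + Polynomial.C D)
      (by rw [Polynomial.degree_cubic hA]; exact (by decide))
    refine ⟨t, 1, by simp, ?_⟩
    have : A*t^3 + B*t^2 + C*t + D = 0 := by
      simpa [Polynomial.IsRoot] using ht
    linear_combination this

lemma stmt15_quad {k : Type*} [Field k] (x0 y0 x1 y1 x2 y2 a b c : k)
    (h01 : x0*y1 ≠ x1*y0) (h02 : x0*y2 ≠ x2*y0) (h12 : x1*y2 ≠ x2*y1)
    (e0 : a*x0^2 + b*x0*y0 + c*y0^2 = 0)
    (e1 : a*x1^2 + b*x1*y1 + c*y1^2 = 0)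
    (e2 : a*x2^2 + b*x2*y2 + c*y2^2 = 0) :
    a = 0 ∧ b = 0 ∧ c = 0 := by
  have hD : (x0*y1 - x1*y0) * ((x0*y2 - x2*y0) * (x1*y2 - x2*y1)) ≠ 0 :=
    mul_ne_zero (sub_ne_zero.2 h01) (mul_ne_zero (sub_ne_zero.2 h02) (sub_ne_zero.2 h12))
  refine ⟨?_, ?_, ?_⟩
  · have : a * ((x0*y1 - x1*y0) * ((x0*y2 - x2*y0) * (x1*y2 - x2*y1))) = 0 := by
      linear_combination (y1*y2*(x1*y2-x2*y1)) * e0 - (y0*y2*(x0*y2-x2*y0)) * e1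
        + (y0*y1*(x0*y1-x1*y0)) * e2
    exact (mul_eq_zero.1 this).resolve_right hD
  · have : b * ((x0*y1 - x1*y0) * ((x0*y2 - x2*y0) * (x1*y2 - x2*y1))) = 0 := by
      linear_combination (-(x1*y2-x2*y1)*(x1*y2+x2*y1)) * e0
        + ((x0*y2-x2*y0)*(x0*y2+x2*y0)) * e1 - ((x0*y1-x1*y0)*(x0*y1+x1*y0)) * e2
    exact (mul_eq_zero.1 this).resolve_right hD
  · have : c * ((x0*y1 - x1*y0) * ((x0*y2 - x2*y0) * (x1*y2 - x2*y1))) = 0 := by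
      linear_combination (x1*x2*(x1*y2-x2*y1)) * e0 - (x0*x2*(x0*y2-x2*y0)) * e1
        + (x0*x1*(x0*y1-x1*y0)) * e2
    exact (mul_eq_zero.1 this).resolve_right hD

/-- Let `δ₁, δ₂` be bihomogeneous of bidegree `(2,3)` and `δ₃` of
bidegree `(4,1)` in `k[u₀,u₁,v₀,v₁]`, `k` algebraically closed (bihomogeneity is
weighted homogeneity for the weights `u ↦ (1,0)`, `v ↦ (0,1)`).  Suppose the common
zeros of `δ₁, δ₂` in `ℙ¹ × ℙ¹` are exactly 12 points `z 0, …, z 11`, pairwise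
distinct with pairwise distinct (non-proportional) second coordinates `(v₀ : v₁)`,
and `δ₃` vanishes at none of them.  If `P₁, P₂` are bihomogeneous of bidegree `(2,0)`,
`P₃ of bidegree `(0,2)`, and `P₁δ₁ + P₂δ₂ + P₃δ₃ = 0`, then `P₁ = P₂ = P₃ = 0`. -/
theorem stmt15 {k : Type*} [Field k] [IsAlgClosed k]
    (w : Fin 4 → ℕ × ℕ) (hw : w = ![(1,0), (1,0), (0,1), (0,1)])
    (δ₁ δ₂ δ₃ : MvPolynomial (Fin 4) k)
    (hδ₁ : δ₁.IsWeightedHomogeneous w (2,3))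
    (hδ₂ : δ₂.IsWeightedHomogeneous w (2,3))
    (hδ₃ : δ₃.IsWeightedHomogeneous w (4,1))
    (z : Fin 12 → (k × k) × (k × k))
    (hz_nonzero : ∀ i, (z i).1 ≠ (0, 0) ∧ (z i).2 ≠ (0, 0))
    (hz_zero : ∀ i,
      eval ![(z i).1.1, (z i).1.2, (z i).2.1, (z i).2.2] δ₁ = 0 ∧
      eval ![(z i).1.1, (z i).1.2, (z i).2.1, (z i).2.2] δ₂ = 0)
    (hz_v_distinct : ∀ i j, i ≠ j →
      (z i).2.1 * (z j).2.2 ≠ (z j).2.1 * (z i).2.2)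
    (hz_all : ∀ p : (k × k) × (k × k), p.1 ≠ (0, 0) → p.2 ≠ (0, 0) →
      eval ![p.1.1, p.1.2, p.2.1, p.2.2] δ₁ = 0 →
      eval ![p.1.1, p.1.2, p.2.1, p.2.2] δ₂ = 0 →
      ∃ i, (∃ c : k, c ≠ 0 ∧ p.1 = c • (z i).1) ∧ ∃ d : k, d ≠ 0 ∧ p.2 = d • (z i).2)
    (hδ₃_ne : ∀ i, eval ![(z i).1.1, (z i).1.2, (z i).2.1, (z i).2.2] δ₃ ≠ 0)
    (P₁ P₂ P₃ : MvPolynomial (Fin 4) k)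
    (hP₁ : P₁.IsWeightedHomogeneous w (2,0))
    (hP₂ : P₂.IsWeightedHomogeneous w (2,0))
    (hP₃ : P₃.IsWeightedHomogeneous w (0,2))
    (hrel : P₁ * δ₁ + P₂ * δ₂ + P₃ * δ₃ = 0) :
    P₁ = 0 ∧ P₂ = 0 ∧ P₃ = 0 := by
  classical
  -- pigeonhole: there is no 13-element set of `t`'s such that `((t,1), v)` is a
  -- common zero of δ₁, δ₂ for some v ≠ 0
  have pigeon : ∀ T : Finset k, T.card = 13 →
      (∀ t ∈ T, ∃ v : k × k, v ≠ (0,0) ∧ eval ![t, 1, v.1, v.2] δ₁ = 0 ∧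
        eval ![t, 1, v.1, v.2] δ₂ = 0) → False := by
    intro T hT hroot
    have key : ∀ t ∈ T, ∃ i : Fin 12, ∃ c : k, c ≠ 0 ∧ ((t, 1) : k × k) = c • (z i).1 := by
      intro t ht
      obtain ⟨v, hv, h1, h2⟩ := hroot t ht
      obtain ⟨i, ⟨c, hc, hcp⟩, -⟩ := hz_all ((t, 1), v) (by simp [Prod.ext_iff]) hv h1 h2
      exact ⟨i, c, hc, hcp⟩
    choose f hf using key
    have hmaps : ∀ t ∈ T, (if h : t ∈ T then f t h else 0) ∈ (Finset.univ : Finset (Fin 12)) :=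
      fun t _ => Finset.mem_univ _
    obtain ⟨t, ht, t', ht', hne, heq⟩ :=
      Finset.exists_ne_map_eq_of_card_lt_of_maps_to
        (show (Finset.univ : Finset (Fin 12)).card < T.card by simp [hT]) hmaps
    rw [dif_pos ht, dif_pos ht'] at heq
    obtain ⟨c, hc, hcp⟩ := hf t ht
    obtain ⟨c', hc', hcp'⟩ := hf t' ht'
    rw [heq] at hcp
    rw [Prod.ext_iff] at hcp hcp'
    simp only [Prod.smul_fst, Prod.smul_snd, smul_eq_mul] at hcp hcp'
    obtain ⟨hc1, hc2⟩ := hcp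
    obtain ⟨hc1', hc2'⟩ := hcp'
    have hq : (z (f t' ht')).1.2 ≠ 0 := by
      intro h0; rw [h0, mul_zero] at hc2; exact one_ne_zero hc2
    have hcc : c = c' := mul_right_cancel₀ hq (hc2.symm.trans hc2')
    exact hne (by linear_combination hc1 - hc1' + (z (f t' ht')).1.1 * hcc)
  -- every weighted-homogeneous (2,3) polynomial has, for each t, a nontrivial root in v
  have vroot : ∀ (δ : MvPolynomial (Fin 4) k), δ.IsWeightedHomogeneous w (2,3) → ∀ t : k,
      ∃ v : k × k, v ≠ (0,0) ∧ eval ![t, 1, v.1, v.2] δ = 0 := by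
    intro δ hδ t
    obtain ⟨x, y, hxy, hroot⟩ := stmt15_cubic_root
      (coeff (stmt15fe 0 2 3 0) δ + coeff (stmt15fe 1 1 3 0) δ * t
        + coeff (stmt15fe 2 0 3 0) δ * t^2)
      (coeff (stmt15fe 0 2 2 1) δ + coeff (stmt15fe 1 1 2 1) δ * t
        + coeff (stmt15fe 2 0 2 1) δ * t^2)
      (coeff (stmt15fe 0 2 1 2) δ + coeff (stmt15fe 1 1 1 2) δ * t
        + coeff (stmt15fe 2 0 1 2) δ * t^2)
      (coeff (stmt15fe 0 2 0 3) δ + coeff (stmt15fe 1 1 0 3) δ * t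
        + coeff (stmt15fe 2 0 0 3) δ * t^2)
    refine ⟨(x, y), by simpa [Prod.ext_iff] using hxy, ?_⟩
    conv_lhs => rw [stmt15_rep hw 2 3 δ hδ]
    simp only [map_sum, map_add, Finset.sum_range_succ, Finset.sum_range_zero, zero_add,
      stmt15_eval_monomial_fe, Matrix.cons_val_zero, Matrix.cons_val_one, Matrix.head_cons,
      Matrix.cons_val]
    norm_num
    linear_combination hroot
  -- Step 1 : P₃ = 0
  have hP₃eval : ∀ i : Fin 12,
      eval ![(z i).1.1, (z i).1.2, (z i).2.1, (z i).2.2] P₃ = 0 := by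
    intro i
    have h0 := congrArg (eval ![(z i).1.1, (z i).1.2, (z i).2.1, (z i).2.2]) hrel
    simp only [map_add, map_mul, map_zero, (hz_zero i).1, (hz_zero i).2, mul_zero,
      zero_add, add_zero] at h0
    exact (mul_eq_zero.1 h0).resolve_right (hδ₃_ne i)
  have quadeval : ∀ i : Fin 12,
      coeff (stmt15fe 0 0 2 0) P₃ * (z i).2.1^2
      + coeff (stmt15fe 0 0 1 1) P₃ * ((z i).2.1 * (z i).2.2)
      + coeff (stmt15fe 0 0 0 2) P₃ * (z i).2.2^2 = 0 := by
    intro i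
    have h0 := hP₃eval i
    conv_lhs at h0 => rw [stmt15_rep hw 0 2 P₃ hP₃]
    simp only [map_sum, map_add, Finset.sum_range_succ, Finset.sum_range_zero, zero_add,
      stmt15_eval_monomial_fe, Matrix.cons_val_zero, Matrix.cons_val_one,
      Matrix.head_cons, Matrix.cons_val] at h0
    norm_num at h0
    linear_combination h0
  have hP₃0 : P₃ = 0 := by
    have key := stmt15_quad (z 0).2.1 (z 0).2.2 (z 1).2.1 (z 1).2.2 (z 2).2.1 (z 2).2.2
      (coeff (stmt15fe 0 0 2 0) P₃) (coeff (stmt15fe 0 0 1 1) P₃)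
      (coeff (stmt15fe 0 0 0 2) P₃)
      (hz_v_distinct 0 1 (by decide)) (hz_v_distinct 0 2 (by decide))
      (hz_v_distinct 1 2 (by decide))
      (by linear_combination quadeval 0) (by linear_combination quadeval 1)
      (by linear_combination quadeval 2)
    rw [stmt15_rep hw 0 2 P₃ hP₃]
    simp [Finset.sum_range_succ, key.1, key.2.1, key.2.2]
  -- Step 2 : P₂ = 0
  have hrel2 : P₁ * δ₁ + P₂ * δ₂ = 0 := by
    have := hrel; rw [hP₃0] at this; simpa using this
  have hP₂0 : P₂ = 0 := by
    by_contra hne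
    have hg : ¬(coeff (stmt15fe 0 2 0 0) P₂ = 0 ∧ coeff (stmt15fe 1 1 0 0) P₂ = 0 ∧
        coeff (stmt15fe 2 0 0 0) P₂ = 0) := by
      rintro ⟨h0, h1, h2⟩
      apply hne
      rw [stmt15_rep hw 2 0 P₂ hP₂]
      simp [Finset.sum_range_succ, h0, h1, h2]
    set g : Polynomial k := Polynomial.C (coeff (stmt15fe 2 0 0 0) P₂) * Polynomial.X^2
      + Polynomial.C (coeff (stmt15fe 1 1 0 0) P₂) * Polynomial.X
      + Polynomial.C (coeff (stmt15fe 0 2 0 0) P₂) with hgdef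
    have hgne : g ≠ 0 := by
      intro hg0
      apply hg
      refine ⟨?_, ?_, ?_⟩
      · have := congrArg (fun p => Polynomial.coeff p 0) hg0
        simpa [hgdef] using this
      · have := congrArg (fun p => Polynomial.coeff p 1) hg0
        simpa [hgdef] using this
      · have := congrArg (fun p => Polynomial.coeff p 2) hg0
        simpa [hgdef] using this
    have hfin : {t : k | Polynomial.eval t g = 0}.Finite := by
      simpa [Polynomial.IsRoot] using Polynomial.finite_setOf_isRoot hgne
    have hinf : {t : k | Polynomial.eval t g ≠ 0}.Infinite := by
      have h2 := hfin.infinite_compl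
      have : {t : k | Polynomial.eval t g ≠ 0} = {t : k | Polynomial.eval t g = 0}ᶜ := by
        ext u; simp
      rw [this]; exact h2
    obtain ⟨T, hTsub, hTcard⟩ := hinf.exists_subset_card_eq 13
    apply pigeon T hTcard
    intro t ht
    obtain ⟨v, hv, h1⟩ := vroot δ₁ hδ₁ t
    refine ⟨v, hv, h1, ?_⟩
    have h0 := congrArg (eval ![t, 1, v.1, v.2]) hrel2
    simp only [map_add, map_mul, map_zero, h1, mul_zero, zero_add] at h0
    have hP2t : eval ![t, 1, v.1, v.2] P₂ = Polynomial.eval t g := by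
      conv_lhs => rw [stmt15_rep hw 2 0 P₂ hP₂]
      simp only [map_sum, map_add, Finset.sum_range_succ, Finset.sum_range_zero, zero_add,
        stmt15_eval_monomial_fe, Matrix.cons_val_zero, Matrix.cons_val_one, Matrix.head_cons,
        hgdef, Polynomial.eval_add, Polynomial.eval_mul, Polynomial.eval_pow,
        Polynomial.eval_C, Polynomial.eval_X]
      norm_num
      ring
    have hP2ne : eval ![t, 1, v.1, v.2] P₂ ≠ 0 := by
      rw [hP2t]; exact hTsub (Finset.mem_coe.2 ht)
    exact (mul_eq_zero.1 h0).resolve_left hP2ne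
  -- Step 3 : P₁ = 0
  have hrel3 : P₁ * δ₁ = 0 := by
    have := hrel; rw [hP₃0, hP₂0] at this; simpa using this
  rcases mul_eq_zero.1 hrel3 with h | h
  · exact ⟨h, hP₂0, hP₃0⟩
  · exfalso
    obtain ⟨T, hTcard⟩ := Infinite.exists_subset_card_eq k 13
    apply pigeon T hTcard
    intro t ht
    obtain ⟨v, hv, h2⟩ := vroot δ₂ hδ₂ t
    exact ⟨v, hv, by simp [h], h2⟩
end
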